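/- Let b ∈ ℝ with 1/2 < b ≤ 2/3 and let F = F_{−1,b}. Then: (i) P = {(−b−2, −1), (b+2, −3), (b+4, 2b−1), (−b+4, 5)} is a periodic orbit of F of minimal period 4; (ii) R = {(−b, 2b−1), (−b, −2b+1), (3b−2, −2b+1)} and S = {((b−2)/3, (2b−1)/3), (−b, (2b−1)/3), ((b−2)/3, (−2b+1)/3)} are periodic orbits of F of minimal period 3; (iii) if 4/7 ≤ b ≤ 2/3, then Q₁ = {((b−4)/3, (4b−1)/3), ((2−5b)/3, −1), ((5b−2)/3, (−2b−1)/3), ((7b−4)/3, 2b−1)} is a periodic orbit of F of minimal period 4; (iv) if 1/2 < b ≤ 4/7, then Q₂ = {((−13b+4)/3, (4b−1)/3), (3b−2, (−14b+5)/3), ((5b−2)/3, (−2b−1)/3), ((7b−4)/3, 2b−1)} is a periodic orbit of F of minimal period 4. -/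
import Mathlib


/-- The piecewise linear map `F_{a,b}(x,y) = (|x| - y + a, x - |y| + b)`. -/
noncomputable def F (a b : ℝ) : ℝ × ℝ → ℝ × ℝ :=
  fun p => (|p.1| - p.2 + a, p.1 - |p.2| + b)

/-- `S` is a periodic orbit of `f` of minimal period `n`: it is the (finite) orbit
`{p, f p, …, f^[n-1] p}` of some periodic point `p` of minimal period `n`. -/
def IsPeriodicOrbit (f : ℝ × ℝ → ℝ × ℝ) (n : ℕ) (S : Set (ℝ × ℝ)) : Prop :=
  ∃ p : ℝ × ℝ, Function.minimalPeriod f p = n ∧ 0 < n ∧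
    S = (fun k : ℕ => f^[k] p) '' Set.Iio n

/-- For `1/2 < b ≤ 2/3` and `F = F_{-1,b}`: `P` is a 4-periodic orbit, `R` and `S`
are 3-periodic orbits, and `Q₁` (when `4/7 ≤ b ≤ 2/3`) resp. `Q₂`
(when `1/2 < b ≤ 4/7`) are 4-periodic orbits. -/

lemma Fval (b x y x' y' : ℝ) (h1 : |x| - y - 1 = x') (h2 : x - |y| + b = y') :
    F (-1) b (x, y) = (x', y') := by
  simp only [F, Prod.mk.injEq]
  constructor <;> linarith

lemma orbit4 {f : ℝ × ℝ → ℝ × ℝ} {p1 p2 p3 p4 : ℝ × ℝ}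
    (h1 : f p1 = p2) (h2 : f p2 = p3) (h3 : f p3 = p4) (h4 : f p4 = p1)
    (ne13 : p1 ≠ p3) : IsPeriodicOrbit f 4 {p1, p2, p3, p4} := by
  have i1 : f^[1] p1 = p2 := by simpa using h1
  have i2 : f^[2] p1 = p3 := by rw [Function.iterate_succ_apply', i1, h2]
  have i3 : f^[3] p1 = p4 := by rw [Function.iterate_succ_apply', i2, h3]
  have i4 : f^[4] p1 = p1 := by rw [Function.iterate_succ_apply', i3, h4]
  have hper : Function.IsPeriodicPt f 4 p1 := i4
  have hdvd := hper.minimalPeriod_dvd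
  have hpos : 0 < Function.minimalPeriod f p1 := hper.minimalPeriod_pos (by norm_num)
  have hmp := Function.isPeriodicPt_minimalPeriod f p1
  have hle : Function.minimalPeriod f p1 ≤ 4 := Nat.le_of_dvd (by norm_num) hdvd
  have hm : Function.minimalPeriod f p1 = 4 := by
    interval_cases h : Function.minimalPeriod f p1
    · have hfix : f p1 = p1 := hmp
      exact absurd (by rw [← h2, ← h1, hfix, hfix]) ne13
    · have : f^[2] p1 = p1 := hmp
      rw [i2] at this
      exact absurd this.symm ne13
    · omega
    · rfl
  refine ⟨p1, hm, by norm_num, ?_⟩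
  apply Set.eq_of_subset_of_subset
  · intro x hx
    rcases hx with rfl | rfl | rfl | rfl
    · exact ⟨0, by norm_num, rfl⟩
    · exact ⟨1, by norm_num, i1⟩
    · exact ⟨2, by norm_num, i2⟩
    · exact ⟨3, by norm_num, i3⟩
  · rintro x ⟨k, hk, rfl⟩
    simp only [Set.mem_Iio] at hk
    interval_cases k <;>
      simp [Function.iterate_succ_apply', h1, h2, h3, Set.mem_insert_iff]

lemma orbit3 {f : ℝ × ℝ → ℝ × ℝ} {p1 p2 p3 : ℝ × ℝ}
    (h1 : f p1 = p2) (h2 : f p2 = p3) (h3 : f p3 = p1)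
    (ne12 : p1 ≠ p2) : IsPeriodicOrbit f 3 {p1, p2, p3} := by
  have i1 : f^[1] p1 = p2 := by simpa using h1
  have i2 : f^[2] p1 = p3 := by rw [Function.iterate_succ_apply', i1, h2]
  have i3 : f^[3] p1 = p1 := by rw [Function.iterate_succ_apply', i2, h3]
  have hper : Function.IsPeriodicPt f 3 p1 := i3
  have hdvd := hper.minimalPeriod_dvd
  have hpos : 0 < Function.minimalPeriod f p1 := hper.minimalPeriod_pos (by norm_num)
  have hmp := Function.isPeriodicPt_minimalPeriod f p1
  have hle : Function.minimalPeriod f p1 ≤ 3 := Nat.le_of_dvd (by norm_num) hdvd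
  have hm : Function.minimalPeriod f p1 = 3 := by
    interval_cases h : Function.minimalPeriod f p1
    · have hfix : f p1 = p1 := hmp
      exact absurd (by rw [← h1, hfix]) ne12
    · omega
    · rfl
  refine ⟨p1, hm, by norm_num, ?_⟩
  apply Set.eq_of_subset_of_subset
  · intro x hx
    rcases hx with rfl | rfl | rfl
    · exact ⟨0, by norm_num, rfl⟩
    · exact ⟨1, by norm_num, i1⟩
    · exact ⟨2, by norm_num, i2⟩
  · rintro x ⟨k, hk, rfl⟩
    simp only [Set.mem_Iio] at hk
    interval_cases k <;>
      simp [Function.iterate_succ_apply', h1, h2, Set.mem_insert_iff]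


theorem case_b_in_half_two_thirds (b : ℝ) (hb1 : 1/2 < b) (hb2 : b ≤ 2/3) :
    IsPeriodicOrbit (F (-1) b) 4
      {(-b-2, -1), (b+2, -3), (b+4, 2*b-1), (-b+4, 5)} ∧
    IsPeriodicOrbit (F (-1) b) 3
      {(-b, 2*b-1), (-b, -2*b+1), (3*b-2, -2*b+1)} ∧
    IsPeriodicOrbit (F (-1) b) 3
      {((b-2)/3, (2*b-1)/3), (-b, (2*b-1)/3), ((b-2)/3, (-2*b+1)/3)} ∧
    (4/7 ≤ b →
      IsPeriodicOrbit (F (-1) b) 4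
        {((b-4)/3, (4*b-1)/3), ((2-5*b)/3, -1), ((5*b-2)/3, (-2*b-1)/3),
         ((7*b-4)/3, 2*b-1)}) ∧
    (b ≤ 4/7 →
      IsPeriodicOrbit (F (-1) b) 4
        {((-13*b+4)/3, (4*b-1)/3), (3*b-2, (-14*b+5)/3), ((5*b-2)/3, (-2*b-1)/3),
         ((7*b-4)/3, 2*b-1)}) := by
  refine ⟨?_, ?_, ?_, ?_, ?_⟩
  · -- P, period 4
    refine orbit4 ?_ ?_ ?_ ?_ ?_
    · exact Fval b _ _ _ _ (by rw [abs_of_neg (by linarith)]; ring)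
        (by rw [abs_of_neg (by norm_num : (-1:ℝ) < 0)]; ring)
    · exact Fval b _ _ _ _ (by rw [abs_of_pos (by linarith)]; ring)
        (by rw [abs_of_neg (by norm_num : (-3:ℝ) < 0)]; ring)
    · exact Fval b _ _ _ _ (by rw [abs_of_pos (by linarith)]; ring)
        (by rw [abs_of_pos (by linarith)]; ring)
    · exact Fval b _ _ _ _ (by rw [abs_of_pos (by linarith)]; ring)
        (by rw [abs_of_pos (by norm_num : (0:ℝ) < 5)]; ring)
    · intro h; rw [Prod.mk.injEq] at h; linarith [h.1]
  · -- R, period 3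
    refine orbit3 ?_ ?_ ?_ ?_
    · exact Fval b _ _ _ _ (by rw [abs_of_neg (by linarith)]; ring)
        (by rw [abs_of_pos (by linarith)]; ring)
    · exact Fval b _ _ _ _ (by rw [abs_of_neg (by linarith)]; ring)
        (by rw [abs_of_neg (by linarith)]; ring)
    · exact Fval b _ _ _ _ (by rw [abs_of_nonpos (by linarith)]; ring)
        (by rw [abs_of_neg (by linarith)]; ring)
    · intro h; rw [Prod.mk.injEq] at h; linarith [h.2]
  · -- S, period 3
    refine orbit3 ?_ ?_ ?_ ?_
    · exact Fval b _ _ _ _ (by rw [abs_of_neg (by linarith)]; ring)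
        (by rw [abs_of_pos (by linarith)]; ring)
    · exact Fval b _ _ _ _ (by rw [abs_of_neg (by linarith)]; ring)
        (by rw [abs_of_pos (by linarith)]; ring)
    · exact Fval b _ _ _ _ (by rw [abs_of_neg (by linarith)]; ring)
        (by rw [abs_of_neg (by linarith)]; ring)
    · intro h; rw [Prod.mk.injEq] at h; linarith [h.1]
  · -- Q1, period 4
    intro hb
    refine orbit4 ?_ ?_ ?_ ?_ ?_
    · exact Fval b _ _ _ _ (by rw [abs_of_neg (by linarith)]; ring)
        (by rw [abs_of_pos (by linarith)]; ring)
    · exact Fval b _ _ _ _ (by rw [abs_of_neg (by linarith)]; ring)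
        (by rw [abs_of_neg (by norm_num : (-1:ℝ) < 0)]; ring)
    · exact Fval b _ _ _ _ (by rw [abs_of_pos (by linarith)]; ring)
        (by rw [abs_of_neg (by linarith)]; ring)
    · exact Fval b _ _ _ _ (by rw [abs_of_nonneg (by linarith)]; ring)
        (by rw [abs_of_pos (by linarith)]; ring)
    · intro h; rw [Prod.mk.injEq] at h; linarith [h.1]
  · -- Q2, period 4
    intro hb
    refine orbit4 ?_ ?_ ?_ ?_ ?_
    · exact Fval b _ _ _ _ (by rw [abs_of_neg (by linarith)]; ring)
        (by rw [abs_of_pos (by linarith)]; ring)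
    · exact Fval b _ _ _ _ (by rw [abs_of_nonpos (by linarith)]; ring)
        (by rw [abs_of_neg (by linarith)]; ring)
    · exact Fval b _ _ _ _ (by rw [abs_of_pos (by linarith)]; ring)
        (by rw [abs_of_neg (by linarith)]; ring)
    · exact Fval b _ _ _ _ (by rw [abs_of_nonpos (by linarith)]; ring)
        (by rw [abs_of_pos (by linarith)]; ring)
    · intro h; rw [Prod.mk.injEq] at h; linarith [h.1]
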